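/- Let n be a finite-dimensional nilpotent Lie algebra. The contravariant functor sending an n-torsion module V (with V = colim V^{n^m}, V^n finite-dimensional) to its full dual V*, and the functor sending an n-adically complete module W (with W = lim W/n^m W, W/nW finite-dimensional) to its continuous dual W^{cont-*} = {φ ∈ W* : φ(n^m W)=0 for some m}, are mutually inverse anti-equivalences between the category M_tor(n) of torsion modules and the category M_com(n) of complete modules. -/

import Mathlib

open UniversalEnvelopingAlgebra

attribute [local instance 100] LieRing.ofAssociativeRing

noncomputable def augSpan (k : Type) [Field k] (L : Type) [LieRing L] [LieAlgebra k L] :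
    Submodule k (UniversalEnvelopingAlgebra k L) :=
  Submodule.span k (Set.range (ι k : L →ₗ⁅k⁆ UniversalEnvelopingAlgebra k L))

noncomputable def smulSub (k : Type) [Field k] (L : Type) [LieRing L] [LieAlgebra k L]
    {V : Type} [AddCommGroup V] [Module (UniversalEnvelopingAlgebra k L) V]
    [Module k V] [IsScalarTower k (UniversalEnvelopingAlgebra k L) V]
    (N : Submodule k (UniversalEnvelopingAlgebra k L)) (W : Submodule k V) : Submodule k V :=
  Submodule.span k {z : V | ∃ x ∈ N, ∃ w ∈ W, z = x • w}

/-- `n^m V`. -/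
noncomputable def nPow (k : Type) [Field k] (L : Type) [LieRing L] [LieAlgebra k L]
    (V : Type) [AddCommGroup V] [Module (UniversalEnvelopingAlgebra k L) V]
    [Module k V] [IsScalarTower k (UniversalEnvelopingAlgebra k L) V] (m : ℕ) :
    Submodule k V :=
  smulSub k L ((augSpan k L) ^ m) (⊤ : Submodule k V)

/-- `V^{n^m}`. -/
noncomputable def annN (k : Type) [Field k] (L : Type) [LieRing L] [LieAlgebra k L]
    (V : Type) [AddCommGroup V] [Module (UniversalEnvelopingAlgebra k L) V]
    [Module k V] [IsScalarTower k (UniversalEnvelopingAlgebra k L) V] (m : ℕ) :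
    Submodule k V where
  carrier := {v | ∀ x ∈ (augSpan k L) ^ m, x • v = 0}
  add_mem' := by
    intro a b ha hb x hx
    rw [smul_add, ha x hx, hb x hx, add_zero]
  zero_mem' := by
    intro x hx
    simp
  smul_mem' := by
    intro c v hv x hx
    rw [← smul_comm c x v, hv x hx, smul_zero]

def IsCauchySeq (k : Type) [Field k] (L : Type) [LieRing L] [LieAlgebra k L]
    {V : Type} [AddCommGroup V] [Module (UniversalEnvelopingAlgebra k L) V]
    [Module k V] [IsScalarTower k (UniversalEnvelopingAlgebra k L) V] (v : ℕ → V) : Prop :=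
  ∀ m : ℕ, v (m + 1) - v m ∈ nPow k L V m

/- STATEMENT 9: the full dual `(·)*` and the continuous dual `(·)^{cont-*}` are mutually
inverse anti-equivalences between `M_tor(n)` and `M_com(n)`.  Here `V ∈ M_tor(n)` (every
vector is `n`-torsion and `V^n` is finite-dimensional), and `W`, equipped with the pairing
`B : W ≅ V*` intertwining the contragredient actions, plays the role of the full dual of
`V`.  The conclusions state: `W ∈ M_com(n)` (i.e. `W/nW` is finite-dimensional and `W` is
`n`-adically separated and complete), and the canonical evaluation map identifies `V` with
the continuous dual `W^{cont-*}` (functionals vanishing on some `n^m W`). -/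
section Aux

variable {k : Type} [Field k] {L : Type} [LieRing L] [LieAlgebra k L]

lemma exists_of_mem_augSpan {x : UniversalEnvelopingAlgebra k L} (hx : x ∈ augSpan k L) :
    ∃ y : L, (ι k y : UniversalEnvelopingAlgebra k L) = x := by
  induction hx using Submodule.span_induction with
  | mem x h => exact h
  | zero => exact ⟨0, by rw [← LieHom.coe_toLinearMap, map_zero]⟩
  | add x y _ _ ihx ihy =>
    obtain ⟨a, ha⟩ := ihx; obtain ⟨b, hb⟩ := ihy
    exact ⟨a + b, by rw [map_add, ha, hb]⟩
  | smul c x _ ih =>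
    obtain ⟨a, ha⟩ := ih
    exact ⟨c • a, by rw [map_smul, ha]⟩

lemma iota_mem_augSpan (y : L) : (ι k y : UniversalEnvelopingAlgebra k L) ∈ augSpan k L :=
  Submodule.subset_span ⟨y, rfl⟩

variable {M : Type} [AddCommGroup M] [Module (UniversalEnvelopingAlgebra k L) M]
    [Module k M] [IsScalarTower k (UniversalEnvelopingAlgebra k L) M]

/-- `u ↦ u • v` as a `k`-linear map. -/
noncomputable def evSmul (v : M) : UniversalEnvelopingAlgebra k L →ₗ[k] M where
  toFun u := u • v
  map_add' a b := add_smul a b v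
  map_smul' c u := smul_assoc c u v

@[simp] lemma evSmul_apply (v : M) (u : UniversalEnvelopingAlgebra k L) :
    evSmul v u = u • v := rfl

/-- `v ↦ u • v` as a `k`-linear map. -/
noncomputable def lsmulU (u : UniversalEnvelopingAlgebra k L) : M →ₗ[k] M where
  toFun v := u • v
  map_add' a b := smul_add u a b
  map_smul' c v := (smul_comm c u v).symm

@[simp] lemma lsmulU_apply (u : UniversalEnvelopingAlgebra k L) (v : M) :
    lsmulU u v = u • v := rfl

lemma eq_zero_of_mem_annN_zero {v : M} (hv : v ∈ annN k L M 0) : v = 0 := by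
  have h := hv 1 (by rw [pow_zero]; exact Submodule.one_le.mp le_rfl)
  rwa [one_smul] at h

lemma iota_smul_mem_annN {m : ℕ} {v : M} (hv : v ∈ annN k L M (m + 1)) (y : L) :
    (ι k y : UniversalEnvelopingAlgebra k L) • v ∈ annN k L M m := by
  intro a ha
  have h : (a * ι k y) • v = 0 :=
    hv _ (by rw [pow_succ]; exact Submodule.mul_mem_mul ha (iota_mem_augSpan y))
  rwa [mul_smul] at h

lemma mem_annN_succ {m : ℕ} {v : M}
    (hv : ∀ y : L, (ι k y : UniversalEnvelopingAlgebra k L) • v ∈ annN k L M m) :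
    v ∈ annN k L M (m + 1) := by
  intro u hu
  have hle : (augSpan k L) ^ (m + 1) ≤ LinearMap.ker (evSmul v) := by
    rw [pow_succ]
    refine Submodule.mul_le.mpr ?_
    intro a ha x hx
    obtain ⟨y, rfl⟩ := exists_of_mem_augSpan hx
    refine LinearMap.mem_ker.mpr ?_
    rw [evSmul_apply, mul_smul]
    exact hv y a ha
  exact LinearMap.mem_ker.mp (hle hu)

lemma annN_mono (m : ℕ) : annN k L M m ≤ annN k L M (m + 1) := by
  intro v hv u hu
  have hle : (augSpan k L) ^ (m + 1) ≤ LinearMap.ker (evSmul v) := by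
    rw [pow_succ']
    refine Submodule.mul_le.mpr ?_
    intro x hx a ha
    refine LinearMap.mem_ker.mpr ?_
    rw [evSmul_apply, mul_smul, hv a ha, smul_zero]
  exact LinearMap.mem_ker.mp (hle hu)

lemma annN_le {m m' : ℕ} (h : m ≤ m') : annN k L M m ≤ annN k L M m' := by
  induction m', h using Nat.le_induction with
  | base => exact le_rfl
  | succ m' _ ih => exact ih.trans (annN_mono m')

lemma iota_smul_eq_sum {r : ℕ} (b : Module.Basis (Fin r) k L) (y : L) (v : M) :
    (ι k y : UniversalEnvelopingAlgebra k L) • v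
      = ∑ j, b.repr y j • ((ι k (b j) : UniversalEnvelopingAlgebra k L) • v) := by
  have h1 : (ι k y : UniversalEnvelopingAlgebra k L)
      = ∑ j, b.repr y j • (ι k (b j) : UniversalEnvelopingAlgebra k L) := by
    conv_lhs => rw [← b.sum_repr y]
    rw [← LieHom.coe_toLinearMap, map_sum]
    simp [LieHom.coe_toLinearMap]
  rw [h1, Finset.sum_smul]
  exact Finset.sum_congr rfl fun j _ => smul_assoc _ _ _

end Aux

section Dual

variable {k : Type} [Field k] {L : Type} [LieRing L] [LieAlgebra k L]
variable {V W : Type} [AddCommGroup V] [Module (UniversalEnvelopingAlgebra k L) V]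
    [Module k V] [IsScalarTower k (UniversalEnvelopingAlgebra k L) V]
    [AddCommGroup W] [Module (UniversalEnvelopingAlgebra k L) W]
    [Module k W] [IsScalarTower k (UniversalEnvelopingAlgebra k L) W]
    (B : W →ₗ[k] Module.Dual k V)

lemma smul_pair_zero
    (hContra : ∀ (x : L) (w : W) (v : V),
      B ((ι k x : UniversalEnvelopingAlgebra k L) • w) v
        = - B w ((ι k x : UniversalEnvelopingAlgebra k L) • v)) :
    ∀ (m : ℕ) (u : UniversalEnvelopingAlgebra k L), u ∈ (augSpan k L) ^ m →
      ∀ (w : W) (v : V), v ∈ annN k L V m → B (u • w) v = 0 := by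
  intro m
  induction m with
  | zero =>
    intro u _ w v hv
    rw [eq_zero_of_mem_annN_zero hv]
    exact map_zero (B (u • w))
  | succ m ih =>
    intro u hu w v hv
    have hle : (augSpan k L) ^ (m + 1) ≤ LinearMap.ker ((B.flip v) ∘ₗ evSmul w) := by
      rw [pow_succ']
      refine Submodule.mul_le.mpr ?_
      intro x hx a ha
      obtain ⟨y, rfl⟩ := exists_of_mem_augSpan hx
      refine LinearMap.mem_ker.mpr ?_
      have h1 : ((B.flip v) ∘ₗ evSmul w) (ι k y * a) = B ((ι k y : UniversalEnvelopingAlgebra k L) • (a • w)) v := by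
        simp [mul_smul]
      rw [h1, hContra]
      have h2 : (ι k y : UniversalEnvelopingAlgebra k L) • v ∈ annN k L V m :=
        iota_smul_mem_annN hv y
      rw [ih a ha w _ h2, neg_zero]
    have := LinearMap.mem_ker.mp (hle hu)
    simpa using this

lemma pair_zero
    (hContra : ∀ (x : L) (w : W) (v : V),
      B ((ι k x : UniversalEnvelopingAlgebra k L) • w) v
        = - B w ((ι k x : UniversalEnvelopingAlgebra k L) • v))
    {m : ℕ} {v : V} (hv : v ∈ annN k L V m) {w : W} (hw : w ∈ nPow k L W m) :
    B w v = 0 := by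
  have hle : nPow k L W m ≤ LinearMap.ker (B.flip v) := by
    unfold nPow smulSub
    refine Submodule.span_le.mpr ?_
    rintro z ⟨x, hx, t, -, rfl⟩
    exact LinearMap.mem_ker.mpr (smul_pair_zero B hContra m x hx t v hv)
  simpa using LinearMap.mem_ker.mp (hle hw)

lemma mem_nPow_zero (w : W) : w ∈ nPow k L W 0 := by
  unfold nPow smulSub
  apply Submodule.subset_span
  exact ⟨1, by rw [pow_zero]; exact Submodule.one_le.mp le_rfl, w, Submodule.mem_top,
    (one_smul _ w).symm⟩

lemma smul_mem_nPow_succ (y : L) {m : ℕ} {w : W} (hw : w ∈ nPow k L W m) :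
    (ι k y : UniversalEnvelopingAlgebra k L) • w ∈ nPow k L W (m + 1) := by
  unfold nPow smulSub at hw ⊢
  induction hw using Submodule.span_induction with
  | mem z hz =>
    obtain ⟨x, hx, t, -, rfl⟩ := hz
    apply Submodule.subset_span
    exact ⟨ι k y * x, by rw [pow_succ']; exact Submodule.mul_mem_mul (iota_mem_augSpan y) hx,
      t, Submodule.mem_top, (mul_smul _ _ _).symm⟩
  | zero => rw [smul_zero]; exact Submodule.zero_mem _
  | add a b _ _ iha ihb => rw [smul_add]; exact Submodule.add_mem _ iha ihb
  | smul c a _ ih =>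
    rw [← smul_comm c ((ι k y : UniversalEnvelopingAlgebra k L)) a]
    exact Submodule.smul_mem _ c ih

end Dual

section FD

variable {k : Type} [Field k]

lemma fd_of_fd_ker {M N : Type} [AddCommGroup M] [Module k M] [AddCommGroup N] [Module k N]
    [FiniteDimensional k N] (f : M →ₗ[k] N) (hker : FiniteDimensional k (LinearMap.ker f)) :
    FiniteDimensional k M := by
  obtain ⟨p, hp⟩ := Submodule.exists_isCompl (LinearMap.ker f)
  haveI : FiniteDimensional k p := by
    refine FiniteDimensional.of_injective (f.domRestrict p) ?_
    intro a b hab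
    have h1 : (a : M) - (b : M) ∈ LinearMap.ker f := by
      simp only [LinearMap.mem_ker, map_sub]
      rw [show f (a : M) = f.domRestrict p a from rfl,
        show f (b : M) = f.domRestrict p b from rfl, hab, sub_self]
    have h2 : (a : M) - (b : M) ∈ p := Submodule.sub_mem _ a.2 b.2
    have h3 : (a : M) - (b : M) = 0 :=
      Submodule.mem_bot k |>.mp (hp.disjoint.le_bot ⟨h1, h2⟩)
    exact Subtype.ext (sub_eq_zero.mp h3)
  exact Module.Finite.equiv (Submodule.prodEquivOfIsCompl _ p hp)

end FD

section AnnFD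

variable {k : Type} [Field k] {L : Type} [LieRing L] [LieAlgebra k L]
variable {V : Type} [AddCommGroup V] [Module (UniversalEnvelopingAlgebra k L) V]
    [Module k V] [IsScalarTower k (UniversalEnvelopingAlgebra k L) V]

lemma annN_fd [FiniteDimensional k L] (hfd : FiniteDimensional k (annN k L V 1)) (m : ℕ) :
    FiniteDimensional k (annN k L V m) := by
  induction m with
  | zero =>
    haveI := hfd
    exact Submodule.finiteDimensional_of_le (annN_mono 0 |>.trans le_rfl |>.trans_eq rfl |>.trans
      (annN_le (le_refl 1)))
  | succ m ih =>
    haveI := ih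
    classical
    set b := Module.finBasis k L with hbdef
    let g : (annN k L V (m + 1)) →ₗ[k] (Fin (Module.finrank k L) → annN k L V m) :=
      LinearMap.pi fun j => (lsmulU (ι k (b j))).restrict fun v hv => iota_smul_mem_annN hv (b j)
    have hg : ∀ (x : annN k L V (m + 1)) (j : Fin (Module.finrank k L)),
        ((g x j : V)) = (ι k (b j) : UniversalEnvelopingAlgebra k L) • (x : V) := fun _ _ => rfl
    have hkg : ∀ x : LinearMap.ker g, ((x : annN k L V (m + 1)) : V) ∈ annN k L V 1 := by
      rintro ⟨x, hx⟩
      intro u hu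
      rw [pow_one] at hu
      obtain ⟨y, rfl⟩ := exists_of_mem_augSpan hu
      rw [iota_smul_eq_sum b y (x : V)]
      refine Finset.sum_eq_zero fun j _ => ?_
      have h0 : g x = 0 := hx
      have h1 : ((g x j : V)) = 0 := by rw [h0]; rfl
      rw [hg x j] at h1
      rw [h1, smul_zero]
    let inj1 : LinearMap.ker g →ₗ[k] annN k L V 1 :=
      { toFun := fun x => ⟨((x : annN k L V (m + 1)) : V), hkg x⟩
        map_add' := fun a c => rfl
        map_smul' := fun c a => rfl }
    haveI : FiniteDimensional k (LinearMap.ker g) := by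
      haveI := hfd
      refine FiniteDimensional.of_injective inj1 ?_
      intro a c h
      have h2 := congrArg (fun z : annN k L V 1 => (z : V)) h
      exact Subtype.ext (Subtype.ext h2)
    exact fd_of_fd_ker g this

end AnnFD

section KeySurj

variable {k : Type} [Field k] {L : Type} [LieRing L] [LieAlgebra k L]
variable {V W : Type} [AddCommGroup V] [Module (UniversalEnvelopingAlgebra k L) V]
    [Module k V] [IsScalarTower k (UniversalEnvelopingAlgebra k L) V]
    [AddCommGroup W] [Module (UniversalEnvelopingAlgebra k L) W]
    [Module k W] [IsScalarTower k (UniversalEnvelopingAlgebra k L) W]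

lemma key_surj [FiniteDimensional k L] (B : W →ₗ[k] Module.Dual k V)
    (hB : Function.Bijective B)
    (hContra : ∀ (x : L) (w : W) (v : V),
      B ((ι k x : UniversalEnvelopingAlgebra k L) • w) v
        = - B w ((ι k x : UniversalEnvelopingAlgebra k L) • v)) :
    ∀ (m : ℕ) (w : W), (∀ v ∈ annN k L V m, B w v = 0) → w ∈ nPow k L W m := by
  intro m
  induction m with
  | zero => intro w _; exact mem_nPow_zero w
  | succ m ih =>
    intro w hw
    classical
    set r := Module.finrank k L with hr
    set b := Module.finBasis k L with hbdef
    set Q := V ⧸ annN k L V m with hQ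
    let β : V →ₗ[k] (Fin r → Q) :=
      LinearMap.pi fun j => (annN k L V m).mkQ ∘ₗ lsmulU (ι k (b j))
    have hβ : ∀ (v : V) (j : Fin r),
        β v j = (annN k L V m).mkQ ((ι k (b j) : UniversalEnvelopingAlgebra k L) • v) :=
      fun _ _ => rfl
    have hkerβ : LinearMap.ker β = annN k L V (m + 1) := by
      ext v
      rw [LinearMap.mem_ker]
      constructor
      · intro h
        refine mem_annN_succ fun y => ?_
        rw [iota_smul_eq_sum b y v]
        refine Submodule.sum_mem _ fun j _ => Submodule.smul_mem _ _ ?_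
        have h1 : β v j = 0 := by rw [h]; rfl
        rw [hβ] at h1
        exact (Submodule.Quotient.mk_eq_zero _).mp h1
      · intro h
        funext j
        rw [hβ]
        exact (Submodule.Quotient.mk_eq_zero _).mpr (iota_smul_mem_annN h (b j))
    have hwker : annN k L V (m + 1) ≤ LinearMap.ker (B w) := fun v hv =>
      LinearMap.mem_ker.mpr (hw v hv)
    let φQ := (annN k L V (m + 1)).liftQ (B w) hwker
    let βQ := (annN k L V (m + 1)).liftQ β hkerβ.ge
    have hinjβQ : LinearMap.ker βQ = ⊥ := Submodule.ker_liftQ_eq_bot _ _ _ hkerβ.le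
    obtain ⟨π, hπ⟩ := βQ.exists_leftInverse_of_injective hinjβQ
    let g : (Fin r → Q) →ₗ[k] k := φQ ∘ₗ π
    have hg : ∀ v : V, g (β v) = B w v := by
      intro v
      have h1 : β v = βQ (Submodule.Quotient.mk v) := rfl
      have h2 : π (βQ (Submodule.Quotient.mk v)) = Submodule.Quotient.mk v := by
        have := LinearMap.congr_fun hπ (Submodule.Quotient.mk v)
        simpa using this
      show φQ (π (β v)) = B w v
      rw [h1, h2]
      exact Submodule.liftQ_apply _ _ _
    let ψ : Fin r → Module.Dual k V := fun j =>
      (g ∘ₗ LinearMap.single k (fun _ : Fin r => Q) j) ∘ₗ (annN k L V m).mkQ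
    have hψ : ∀ (j : Fin r) (v : V),
        ψ j v = g (Pi.single j ((annN k L V m).mkQ v)) := fun _ _ => rfl
    have hψann : ∀ j, ∀ v ∈ annN k L V m, ψ j v = 0 := by
      intro j v hv
      have hz : (annN k L V m).mkQ v = 0 := (Submodule.Quotient.mk_eq_zero _).mpr hv
      rw [hψ, hz, Pi.single_zero]
      exact map_zero g
    have hsum : ∀ v : V, ∑ j, ψ j ((ι k (b j) : UniversalEnvelopingAlgebra k L) • v)
        = B w v := by
      intro v
      have h1 : (∑ j, Pi.single j (β v j) : Fin r → Q) = β v := by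
        funext i
        rw [Finset.sum_apply]
        exact Fintype.sum_pi_single i (β v)
      calc ∑ j, ψ j ((ι k (b j) : UniversalEnvelopingAlgebra k L) • v)
          = ∑ j, g (Pi.single j (β v j)) := by
            refine Finset.sum_congr rfl fun j _ => ?_
            rw [hψ, hβ]
        _ = g (∑ j, Pi.single j (β v j)) := (map_sum g _ _).symm
        _ = g (β v) := by rw [h1]
        _ = B w v := hg v
    let e := LinearEquiv.ofBijective B hB
    let wj : Fin r → W := fun j => e.symm (ψ j)
    have hBwj : ∀ j, B (wj j) = ψ j := fun j => e.apply_symm_apply (ψ j)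
    have hwj : ∀ j, wj j ∈ nPow k L W m := fun j =>
      ih (wj j) fun v hv => by rw [hBwj j]; exact hψann j v hv
    let w' : W := ∑ j, (ι k (b j) : UniversalEnvelopingAlgebra k L) • wj j
    have hw' : w' ∈ nPow k L W (m + 1) :=
      Submodule.sum_mem _ fun j _ => smul_mem_nPow_succ (b j) (hwj j)
    have hBw' : B w' = -B w := by
      ext v
      have h1 : B w' v = ∑ j, B ((ι k (b j) : UniversalEnvelopingAlgebra k L) • wj j) v := by
        rw [show w' = ∑ j, (ι k (b j) : UniversalEnvelopingAlgebra k L) • wj j from rfl,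
          map_sum]
        exact LinearMap.sum_apply _ _ _
      rw [h1]
      have h2 : ∀ j, B ((ι k (b j) : UniversalEnvelopingAlgebra k L) • wj j) v
          = -(ψ j ((ι k (b j) : UniversalEnvelopingAlgebra k L) • v)) := by
        intro j
        rw [hContra, hBwj j]
      rw [Finset.sum_congr rfl fun j _ => h2 j, Finset.sum_neg_distrib, hsum,
        LinearMap.neg_apply]
    have hfin : w = -w' := by
      apply hB.injective
      rw [map_neg, hBw', neg_neg]
    rw [hfin]
    exact Submodule.neg_mem _ hw'

end KeySurj

theorem stmt9 (k : Type) [Field k] [CharZero k]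
    (L : Type) [LieRing L] [LieAlgebra k L] [FiniteDimensional k L]
    [LieRing.IsNilpotent L]
    (V : Type) [AddCommGroup V] [Module (UniversalEnvelopingAlgebra k L) V]
    [Module k V] [IsScalarTower k (UniversalEnvelopingAlgebra k L) V]
    (W : Type) [AddCommGroup W] [Module (UniversalEnvelopingAlgebra k L) W]
    [Module k W] [IsScalarTower k (UniversalEnvelopingAlgebra k L) W]
    -- `V ∈ M_tor(n)`
    (htor : ∀ v : V, ∃ m : ℕ, v ∈ annN k L V m)
    (hfd : FiniteDimensional k (annN k L V 1))
    -- `W` is the full dual of `V` with the contragredient action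
    (B : W →ₗ[k] Module.Dual k V) (hB : Function.Bijective B)
    (hContra : ∀ (x : L) (w : W) (v : V),
      B ((ι k x : UniversalEnvelopingAlgebra k L) • w) v
        = - B w ((ι k x : UniversalEnvelopingAlgebra k L) • v)) :
    -- `W ∈ M_com(n)`: `W/nW` finite-dimensional, and `W` separated and complete
    (FiniteDimensional k (W ⧸ nPow k L W 1)) ∧
    (∀ w : ℕ → W, IsCauchySeq k L w → ∃! x : W, ∀ m : ℕ, x - w m ∈ nPow k L W m) ∧
    -- evaluation lands in the continuous dual of `W`
    (∀ v : V, ∃ m : ℕ, ∀ w ∈ nPow k L W m, B w v = 0) ∧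
    -- and identifies `V` with the continuous dual of `W`: injectivity and surjectivity
    (∀ v : V, (∀ w : W, B w v = 0) → v = 0) ∧
    (∀ Φ : Module.Dual k W, (∃ m : ℕ, ∀ w ∈ nPow k L W m, Φ w = 0) →
      ∃ v : V, ∀ w : W, Φ w = B w v) := by
  classical
  set e := LinearEquiv.ofBijective B hB with he
  have hBe : ∀ φ : Module.Dual k V, B (e.symm φ) = φ := fun φ => e.apply_symm_apply φ
  have hesymmB : ∀ w : W, e.symm (B w) = w := fun w => e.symm_apply_apply w
  refine ⟨?_, ?_, ?_, ?_, ?_⟩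
  · -- (1) `W ⧸ nW` finite-dimensional
    haveI := hfd
    let ρ : W →ₗ[k] Module.Dual k (annN k L V 1) :=
      { toFun := fun w => (B w) ∘ₗ (annN k L V 1).subtype
        map_add' := fun a c => by ext v; simp
        map_smul' := fun c a => by ext v; simp }
    have hkerρ : LinearMap.ker ρ = nPow k L W 1 := by
      ext w
      rw [LinearMap.mem_ker]
      constructor
      · intro h
        refine key_surj B hB hContra 1 w fun v hv => ?_
        exact LinearMap.congr_fun h ⟨v, hv⟩
      · intro h
        ext v
        exact pair_zero B hContra v.2 h
    have hinj : LinearMap.ker ((nPow k L W 1).liftQ ρ hkerρ.ge) = ⊥ :=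
      Submodule.ker_liftQ_eq_bot _ _ _ hkerρ.le
    exact FiniteDimensional.of_injective _ (LinearMap.ker_eq_bot.mp hinj)
  · -- (2) completeness
    intro wseq hcauchy
    have hstab : ∀ (v : V) (M : ℕ), v ∈ annN k L V M → ∀ m, M ≤ m →
        B (wseq m) v = B (wseq M) v := by
      intro v M hv m hm
      induction m, hm using Nat.le_induction with
      | base => rfl
      | succ m hm ih =>
        have h2 : B (wseq (m + 1) - wseq m) v = 0 :=
          pair_zero B hContra (annN_le hm hv) (hcauchy m)
        rw [map_sub, LinearMap.sub_apply] at h2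
        rw [sub_eq_zero.mp h2, ih]
    have hstab2 : ∀ (v : V) (m₁ m₂ : ℕ), v ∈ annN k L V m₁ → v ∈ annN k L V m₂ →
        B (wseq m₁) v = B (wseq m₂) v := by
      intro v m₁ m₂ h1 h2
      rw [← hstab v m₁ h1 (max m₁ m₂) (le_max_left _ _),
        ← hstab v m₂ h2 (max m₁ m₂) (le_max_right _ _)]
    have htor' := htor
    choose N hN using htor'
    have hkey : ∀ (v : V) (m : ℕ), v ∈ annN k L V m → B (wseq (N v)) v = B (wseq m) v :=
      fun v m hv => hstab2 v (N v) m (hN v) hv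
    let φ : Module.Dual k V :=
      { toFun := fun v => B (wseq (N v)) v
        map_add' := fun v₁ v₂ => by
          show (B (wseq (N (v₁ + v₂)))) (v₁ + v₂)
            = (B (wseq (N v₁))) v₁ + (B (wseq (N v₂))) v₂
          set M := max (N (v₁ + v₂)) (max (N v₁) (N v₂)) with hM
          have h1 : v₁ ∈ annN k L V M :=
            annN_le ((le_max_left _ _).trans (le_max_right _ _)) (hN v₁)
          have h2 : v₂ ∈ annN k L V M :=
            annN_le ((le_max_right _ _).trans (le_max_right _ _)) (hN v₂)
          have h3 : v₁ + v₂ ∈ annN k L V M := Submodule.add_mem _ h1 h2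
          rw [hkey (v₁ + v₂) M h3, hkey v₁ M h1, hkey v₂ M h2, map_add]
        map_smul' := fun c v => by
          show (B (wseq (N (c • v)))) (c • v) = c • (B (wseq (N v))) v
          have h1 : c • v ∈ annN k L V (N v) := Submodule.smul_mem _ c (hN v)
          rw [hkey (c • v) (N v) h1, map_smul] }
    have hφ : ∀ (v : V) (m : ℕ), v ∈ annN k L V m → φ v = B (wseq m) v :=
      fun v m hv => hkey v m hv
    have hx : ∀ m, e.symm φ - wseq m ∈ nPow k L W m := by
      intro m
      refine key_surj B hB hContra m _ fun v hv => ?_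
      rw [map_sub, LinearMap.sub_apply, hBe, hφ v m hv, sub_self]
    refine ⟨e.symm φ, hx, ?_⟩
    intro y hy
    have hdiff : ∀ m, y - e.symm φ ∈ nPow k L W m := fun m => by
      have := Submodule.sub_mem _ (hy m) (hx m)
      simpa using this
    have hz : B (y - e.symm φ) = 0 := by
      ext v
      obtain ⟨m, hv⟩ := htor v
      rw [LinearMap.zero_apply]
      exact pair_zero B hContra hv (hdiff m)
    have : y - e.symm φ = 0 := hB.injective (by rw [hz, map_zero])
    rw [sub_eq_zero] at this
    exact this
  · -- (3) evaluation is continuous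
    intro v
    obtain ⟨m, hv⟩ := htor v
    exact ⟨m, fun w hw => pair_zero B hContra hv hw⟩
  · -- (4) injectivity
    intro v hv
    rw [← Module.forall_dual_apply_eq_zero_iff k v]
    intro φ
    rw [← hBe φ]
    exact hv _
  · -- (5) surjectivity onto continuous dual
    rintro Φ ⟨m, hΦ⟩
    haveI hF : FiniteDimensional k (annN k L V m) := annN_fd hfd m
    set F := annN k L V m with hFdef
    obtain ⟨π, hπ⟩ := F.subtype.exists_leftInverse_of_injective F.ker_subtype
    let ext : Module.Dual k F →ₗ[k] Module.Dual k V :=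
      { toFun := fun ξ => ξ ∘ₗ π
        map_add' := fun a c => LinearMap.add_comp _ _ _
        map_smul' := fun c a => LinearMap.smul_comp _ _ _ }
    let Ψ : Module.Dual k (Module.Dual k V) := Φ ∘ₗ e.symm.toLinearMap
    have hΨ : ∀ χ : Module.Dual k V, Ψ χ = Φ (e.symm χ) := fun _ => rfl
    have hΨ0 : ∀ χ : Module.Dual k V, (∀ v ∈ F, χ v = 0) → Ψ χ = 0 := by
      intro χ hχ
      have h1 : e.symm χ ∈ nPow k L W m :=
        key_surj B hB hContra m _ fun v hv => by rw [hBe]; exact hχ v hv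
      rw [hΨ]
      exact hΦ _ h1
    let Ψb : Module.Dual k (Module.Dual k F) := Ψ ∘ₗ ext
    let v₀ : F := (Module.evalEquiv k F).symm Ψb
    refine ⟨(v₀ : V), ?_⟩
    intro w
    have h1 : Φ w = Ψ (B w) := by rw [hΨ, hesymmB]
    set ξ : Module.Dual k F := (B w) ∘ₗ F.subtype with hξ
    have h2 : Ψ (B w) = Ψ (ext ξ) := by
      have h3 := hΨ0 (B w - ext ξ) (fun v hv => by
        rw [LinearMap.sub_apply]
        have h4 : π v = ⟨v, hv⟩ := by
          have h5 := LinearMap.congr_fun hπ (⟨v, hv⟩ : F)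
          simpa using h5
        show B w v - ξ (π v) = 0
        rw [h4]
        show B w v - B w v = 0
        exact sub_self _)
      rw [map_sub] at h3
      exact sub_eq_zero.mp h3
    have h5 : Ψ (ext ξ) = ξ v₀ := by
      have := Module.apply_evalEquiv_symm_apply (R := k) (M := F) ξ Ψb
      exact this.symm
    rw [h1, h2, h5]
    rfl
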